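/- Suppose H(σ > θ) = a√(π/2)·log(1/θ) + O(1) as θ ↓ 0, and Φ(λ) = ∫₀¹ H(σ > (−log t)/λ) dt with the contribution from t < e^{−λd} bounded. Then Φ(λ)/(a√(π/2) log λ) → 1 as λ → ∞. -/

import Mathlib

open MeasureTheory Filter Set Real

set_option maxHeartbeats 1000000

lemma aux_neg_log_le (x : ℝ) (hx : 0 < x) : -Real.log x ≤ 2 / Real.sqrt x := by
  have hs : 0 < Real.sqrt x := Real.sqrt_pos.2 hx
  have h1 : Real.log ((Real.sqrt x)⁻¹) ≤ (Real.sqrt x)⁻¹ - 1 :=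
    Real.log_le_sub_one_of_pos (inv_pos.2 hs)
  rw [Real.log_inv] at h1
  have h2 : Real.log x = 2 * Real.log (Real.sqrt x) := by
    rw [Real.log_sqrt hx.le]; ring
  rw [h2, div_eq_mul_inv]
  nlinarith [inv_pos.2 hs]

lemma aux_loglog_int :
    IntegrableOn (fun t => Real.log (-Real.log t)) (Ioo (0:ℝ) 1) volume := by
  have hmeas : AEStronglyMeasurable (fun t => Real.log (-Real.log t))
      (volume.restrict (Ioo (0:ℝ) 1)) :=
    (Real.measurable_log.comp Real.measurable_log.neg).aestronglyMeasurable
  have h1 : IntervalIntegrable (fun t : ℝ => t ^ (-(1/2) : ℝ)) volume 0 1 :=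
    intervalIntegral.intervalIntegrable_rpow' (by norm_num)
  have h2 : IntervalIntegrable (fun t : ℝ => (1 - t) ^ (-(1/2) : ℝ)) volume 0 1 := by
    have := (intervalIntegral.intervalIntegrable_rpow' (r := -(1/2)) (by norm_num) (a := 0) (b := 1)).comp_sub_left 1
    simpa using this.symm
  have hdom : IntegrableOn
      (fun t : ℝ => 2 * (1 - t) ^ (-(1/2) : ℝ) + 2 * t ^ (-(1/2) : ℝ)) (Ioo 0 1) volume := by
    have := ((h2.const_mul 2).add (h1.const_mul 2))
    rw [intervalIntegrable_iff, uIoc_of_le (by norm_num : (0:ℝ) ≤ 1)] at this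
    exact this.mono_set Ioo_subset_Ioc_self
  refine hdom.integrable.mono' hmeas ?_
  rw [ae_restrict_iff' measurableSet_Ioo]
  filter_upwards with t ht
  obtain ⟨ht0, ht1⟩ := ht
  have hu : 0 < -Real.log t := by
    have := Real.log_neg ht0 ht1
    linarith
  have hrp : ∀ y : ℝ, 0 < y → y ^ (-(1/2) : ℝ) = 1 / Real.sqrt y := by
    intro y hy
    rw [Real.rpow_neg hy.le, ← Real.sqrt_eq_rpow, one_div]
  have h1t : 0 < 1 - t := by linarith
  rw [hrp _ h1t, hrp _ ht0]
  rcases le_or_gt (-Real.log t) 1 with hcase | hcase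
  · -- |log u| = -log u ≤ 2/√u ≤ 2/√(1-t)
    have habs : ‖Real.log (-Real.log t)‖ = -Real.log (-Real.log t) := by
      rw [Real.norm_eq_abs, abs_of_nonpos (Real.log_nonpos hu.le hcase)]
    have hb1 : -Real.log (-Real.log t) ≤ 2 / Real.sqrt (-Real.log t) := aux_neg_log_le _ hu
    have hge : 1 - t ≤ -Real.log t := by
      have := Real.log_le_sub_one_of_pos ht0
      linarith
    have hmono : 2 / Real.sqrt (-Real.log t) ≤ 2 / Real.sqrt (1 - t) := by
      apply div_le_div_of_nonneg_left (by norm_num) (Real.sqrt_pos.2 h1t)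
      exact Real.sqrt_le_sqrt hge
    have hpos : 0 ≤ 2 * (1 / Real.sqrt t) := by positivity
    rw [habs]
    have he : (2:ℝ) / Real.sqrt (1 - t) = 2 * (1 / Real.sqrt (1 - t)) := by ring
    rw [he] at hmono
    linarith [hb1.trans hmono]
  · -- |log u| = log u ≤ u = -log t ≤ 2/√t
    have habs : ‖Real.log (-Real.log t)‖ = Real.log (-Real.log t) := by
      rw [Real.norm_eq_abs, abs_of_nonneg (Real.log_nonneg hcase.le)]
    have hb1 : Real.log (-Real.log t) ≤ -Real.log t := by
      have := Real.log_le_sub_one_of_pos hu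
      linarith
    have hb2 : -Real.log t ≤ 2 / Real.sqrt t := aux_neg_log_le _ ht0
    have hpos : 0 ≤ 2 * (1 / Real.sqrt (1 - t)) := by positivity
    rw [habs]
    have he : (2:ℝ) / Real.sqrt t = 2 * (1 / Real.sqrt t) := by ring
    rw [he] at hb2
    linarith [hb1.trans hb2]

lemma aux_key (a : ℝ) (ha : 0 < a) (f : ℝ → ℝ) (hf0 : ∀ θ : ℝ, 0 ≤ f θ)
    (C d : ℝ) (hd : 0 < d)
    (hbd : ∀ θ ∈ Ioo (0:ℝ) d, |f θ - a * Real.sqrt (π / 2) * Real.log (1 / θ)| ≤ C)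
    (hint : ∀ l : ℝ, 1 ≤ l → IntegrableOn (fun t => f (-Real.log t / l)) (Ioo (0:ℝ) 1))
    (M : ℝ)
    (htail : ∀ l : ℝ, 1 ≤ l →
      (∫ t in Ioo (0:ℝ) (Real.exp (-(l * d))), f (-Real.log t / l)) ≤ M) :
    ∃ K : ℝ, ∀ l : ℝ, 1 ≤ l →
      |(∫ t in Ioo (0:ℝ) 1, f (-Real.log t / l))
        - a * Real.sqrt (π / 2) * Real.log l| ≤ K := by
  set b := a * Real.sqrt (π / 2) with hbdef
  have hb : 0 < b := by
    apply mul_pos ha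
    apply Real.sqrt_pos.2
    positivity
  have hC0 : 0 ≤ C := le_trans (abs_nonneg _) (hbd (d/2) ⟨by positivity, by linarith⟩)
  set K₀ := ∫ t in Ioo (0:ℝ) 1, |Real.log (-Real.log t)| with hK₀def
  refine ⟨M + C + b / d + b * K₀, fun l hl => ?_⟩
  have hl0 : (0:ℝ) < l := lt_of_lt_of_le one_pos hl
  set ε := Real.exp (-(l * d)) with hεdef
  have hε0 : 0 < ε := Real.exp_pos _
  have hε1 : ε < 1 := by
    rw [hεdef, Real.exp_lt_one_iff]
    nlinarith
  set F := fun t : ℝ => f (-Real.log t / l) with hFdef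
  have hF : IntegrableOn F (Ioo (0:ℝ) 1) volume := hint l hl
  have hsub1 : Ioo (0:ℝ) ε ⊆ Ioo 0 1 := Ioo_subset_Ioo le_rfl hε1.le
  have hsub2 : Ico ε (1:ℝ) ⊆ Ioo 0 1 := fun x hx => ⟨lt_of_lt_of_le hε0 hx.1, hx.2⟩
  have hsub2' : Ioo ε (1:ℝ) ⊆ Ioo 0 1 := fun x hx => ⟨lt_trans hε0 hx.1, hx.2⟩
  have hdisj : Disjoint (Ioo (0:ℝ) ε) (Ico ε 1) := by
    rw [Set.disjoint_left]
    rintro x ⟨_, h2⟩ ⟨h3, _⟩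
    exact absurd h3 (not_le.2 h2)
  have hunion : Ioo (0:ℝ) ε ∪ Ico ε 1 = Ioo 0 1 := Ioo_union_Ico_eq_Ioo hε0 hε1.le
  have hsplit : (∫ t in Ioo (0:ℝ) 1, F t) =
      (∫ t in Ioo (0:ℝ) ε, F t) + ∫ t in Ioo ε (1:ℝ), F t := by
    rw [← hunion, setIntegral_union hdisj measurableSet_Ico (hF.mono_set hsub1)
      (hF.mono_set hsub2), integral_Ico_eq_integral_Ioo]
  have hT0 : 0 ≤ ∫ t in Ioo (0:ℝ) ε, F t :=
    setIntegral_nonneg measurableSet_Ioo fun x _ => hf0 _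
  have hTM : (∫ t in Ioo (0:ℝ) ε, F t) ≤ M := htail l hl
  set G := fun t : ℝ => b * (Real.log l - Real.log (-Real.log t)) with hGdef
  have hfin : volume (Ioo ε (1:ℝ)) < ⊤ := by
    rw [Real.volume_Ioo]; exact ENNReal.ofReal_lt_top
  have hlogint : IntegrableOn (fun t => Real.log (-Real.log t)) (Ioo ε (1:ℝ)) volume :=
    aux_loglog_int.mono_set hsub2'
  have hGint : IntegrableOn G (Ioo ε (1:ℝ)) volume := by
    apply Integrable.const_mul
    exact (integrableOn_const hfin.ne).sub hlogint
  have hptwise : ∀ t ∈ Ioo ε (1:ℝ), ‖F t - G t‖ ≤ C := by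
    intro t ht
    have ht0 : 0 < t := lt_trans hε0 ht.1
    have hlt : 0 < -Real.log t := by
      have := Real.log_neg ht0 ht.2; linarith
    have hθd : -Real.log t / l < d := by
      have h5 : -(l * d) < Real.log t := by
        calc -(l * d) = Real.log ε := (Real.log_exp _).symm
        _ < Real.log t := Real.log_lt_log hε0 ht.1
      rw [div_lt_iff₀ hl0]
      nlinarith
    have hθ0 : 0 < -Real.log t / l := div_pos hlt hl0
    have hlog : Real.log (1 / (-Real.log t / l)) = Real.log l - Real.log (-Real.log t) := by
      rw [one_div, Real.log_inv, Real.log_div (ne_of_gt hlt) (ne_of_gt hl0)]; ring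
    have h6 := hbd (-Real.log t / l) ⟨hθ0, hθd⟩
    rw [hlog] at h6
    simpa [hFdef, hGdef, Real.norm_eq_abs] using h6
  have hIG : |(∫ t in Ioo ε (1:ℝ), F t) - ∫ t in Ioo ε (1:ℝ), G t| ≤ C := by
    rw [← integral_sub (hF.mono_set hsub2') hGint]
    have h7 := norm_setIntegral_le_of_norm_le_const (μ := volume)
      (f := fun t => F t - G t) hfin hptwise
    rw [Real.norm_eq_abs] at h7
    refine h7.trans ?_
    rw [measureReal_def, Real.volume_Ioo, ENNReal.toReal_ofReal (by linarith)]
    nlinarith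
  set J := ∫ t in Ioo ε (1:ℝ), Real.log (-Real.log t) with hJdef
  have hGval : (∫ t in Ioo ε (1:ℝ), G t) = b * Real.log l * (1 - ε) - b * J := by
    rw [hGdef]
    rw [MeasureTheory.integral_const_mul]
    rw [integral_sub (integrableOn_const (C := Real.log l) hfin.ne) hlogint]
    rw [setIntegral_const, measureReal_def, Real.volume_Ioo, ENNReal.toReal_ofReal (by linarith),
      smul_eq_mul, ← hJdef]
    ring
  have hJK : |J| ≤ K₀ := by
    have h8 := norm_integral_le_integral_norm
      (μ := volume.restrict (Ioo ε (1:ℝ))) (fun t => Real.log (-Real.log t))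
    simp only [Real.norm_eq_abs] at h8
    refine le_trans h8 ?_
    apply setIntegral_mono_set aux_loglog_int.abs
    · filter_upwards with t using abs_nonneg _
    · exact HasSubset.Subset.eventuallyLE hsub2'
  have hεbound : b * Real.log l * ε ≤ b / d := by
    have h1 : Real.log l ≤ l := (Real.log_le_sub_one_of_pos hl0).trans (by linarith)
    have h3 : l * d ≤ Real.exp (l * d) := by
      have := Real.add_one_le_exp (l * d); linarith
    have h2 : ε * (l * d) ≤ 1 := by
      calc ε * (l * d) ≤ ε * Real.exp (l * d) := by
            exact mul_le_mul_of_nonneg_left h3 hε0.le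
      _ = 1 := by rw [hεdef, ← Real.exp_add]; simp
    have hlognn : 0 ≤ Real.log l := Real.log_nonneg hl
    rw [le_div_iff₀ hd]
    have h4 : Real.log l * (ε * d) ≤ l * (ε * d) :=
      mul_le_mul_of_nonneg_right h1 (by positivity)
    have h5 : Real.log l * (ε * d) ≤ 1 := by nlinarith
    nlinarith
  have heq : (∫ t in Ioo (0:ℝ) 1, F t) - b * Real.log l =
      (∫ t in Ioo (0:ℝ) ε, F t)
      + ((∫ t in Ioo ε (1:ℝ), F t) - ∫ t in Ioo ε (1:ℝ), G t)
      - b * Real.log l * ε - b * J := by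
    rw [hsplit, hGval]; ring
  rw [heq]
  have hT : |∫ t in Ioo (0:ℝ) ε, F t| ≤ M := by
    rw [abs_of_nonneg hT0]; exact hTM
  have hZ : 0 ≤ b * Real.log l * ε := by
    have := Real.log_nonneg hl
    positivity
  have hW : |b * J| ≤ b * K₀ := by
    rw [abs_mul, abs_of_nonneg hb.le]
    exact mul_le_mul_of_nonneg_left hJK hb.le
  have e1 := abs_le.1 hT
  have e2 := abs_le.1 hIG
  have e3 := abs_le.1 hW
  rw [abs_le]
  constructor <;> [skip; skip] <;> nlinarith [hεbound, hZ]

/-- If `f(θ) = a√(π/2) log(1/θ) + O(1)` near `0`, `f ≥ 0`, and the contribution to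
`∫₀¹ f((-log t)/λ) dt` from `t < e^{-λ d}` is bounded uniformly in `λ`, then
`∫₀¹ f((-log t)/λ) dt ∼ a√(π/2) log λ` as `λ → ∞`. -/
theorem stmt17 (a : ℝ) (ha : 0 < a) (f : ℝ → ℝ) (hf0 : ∀ θ : ℝ, 0 ≤ f θ)
    (C d : ℝ) (hd : 0 < d)
    (hbd : ∀ θ ∈ Ioo (0:ℝ) d, |f θ - a * Real.sqrt (π / 2) * Real.log (1 / θ)| ≤ C)
    (hint : ∀ l : ℝ, 1 ≤ l → IntegrableOn (fun t => f (-Real.log t / l)) (Ioo (0:ℝ) 1))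
    (M : ℝ)
    (htail : ∀ l : ℝ, 1 ≤ l →
      (∫ t in Ioo (0:ℝ) (Real.exp (-(l * d))), f (-Real.log t / l)) ≤ M) :
    Tendsto (fun l : ℝ =>
        (∫ t in Ioo (0:ℝ) 1, f (-Real.log t / l)) / (a * Real.sqrt (π / 2) * Real.log l))
      atTop (nhds 1) := by
  obtain ⟨K, hK⟩ := aux_key a ha f hf0 C d hd hbd hint M htail
  have hb : 0 < a * Real.sqrt (π / 2) :=
    mul_pos ha (Real.sqrt_pos.2 (by positivity))
  rw [← tendsto_sub_nhds_zero_iff]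
  refine squeeze_zero_norm' (a := fun l => K / (a * Real.sqrt (π / 2) * Real.log l)) ?_ ?_
  · filter_upwards [eventually_ge_atTop (2:ℝ)] with l hl
    have hl1 : (1:ℝ) ≤ l := by linarith
    have hlog : 0 < Real.log l := Real.log_pos (by linarith)
    have hden : 0 < a * Real.sqrt (π / 2) * Real.log l := mul_pos hb hlog
    have heq : (∫ t in Ioo (0:ℝ) 1, f (-Real.log t / l)) /
          (a * Real.sqrt (π / 2) * Real.log l) - 1 =
        ((∫ t in Ioo (0:ℝ) 1, f (-Real.log t / l)) - a * Real.sqrt (π / 2) * Real.log l) /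
          (a * Real.sqrt (π / 2) * Real.log l) := by
      field_simp
    rw [Real.norm_eq_abs, heq, abs_div, abs_of_pos hden]
    exact (div_le_div_iff_of_pos_right hden).2 (hK l hl1)
  · exact tendsto_const_nhds.div_atTop (Real.tendsto_log_atTop.const_mul_atTop hb)
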